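/- arXiv:2405.05601 — 3 statements merged into one kernel-verified Lean document; each statement's English description precedes it below -/
import Mathlib

section
/- Let X be a finite set of weighted intervals partitioned into pairwise disjoint subsets X₁, …, X_p such that for all i < j, every x ∈ X_i and x' ∈ X_j satisfy w(x') ≤ w(x) (weight separation). Fix a query value s and let S = {x ∈ X : x is stabbed by s} and S_i = {x ∈ X_i : x is stabbed by s}. Suppose for some index j ≤ p we have |S₁ ∪ ⋯ ∪ S_j| ≥ k, and let T ⊆ S₁ ∪ ⋯ ∪ S_j be any set with |T| = k such that every y ∈ (S₁ ∪ ⋯ ∪ S_j) \ T and every x ∈ T satisfy w(y) ≤ w(x). Then every y ∈ S \ T and every x ∈ T satisfy w(y) ≤ w(x); that is, T is an exact top-k result for the full stabbed set S. -/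
/-- A weighted interval: a pair of real endpoints `l ≤ r` together with a real weight `w`. -/
structure WInterval where
  l : ℝ
  r : ℝ
  w : ℝ
  le : l ≤ r

noncomputable instance : DecidableEq WInterval := Classical.decEq _

/-- An interval `x` is stabbed by the query value `s` iff `x.l ≤ s ≤ x.r`. -/
def stabbed (s : ℝ) (x : WInterval) : Prop := x.l ≤ s ∧ s ≤ x.r

noncomputable instance (s : ℝ) : DecidablePred (stabbed s) := fun _ => Classical.dec _

/-- Early-termination correctness of the interval-forest (IF) algorithm.
`X` is partitioned into pairwise disjoint subsets `Xs 0, …, Xs (p-1)` with weight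
separation (every weight in an earlier part dominates every weight in a later part).
If the union of the stabbed intervals in the first `j` parts contains at least `k`
intervals, and `T` is a top-k result for that union, then `T` is a top-k result for the
full stabbed set `S = {x ∈ X : x stabbed by s}`. -/
theorem interval_forest_early_termination
    (p : ℕ) (Xs : Fin p → Finset WInterval)
    (hdisj : ∀ i j : Fin p, i ≠ j → Disjoint (Xs i) (Xs j))
    (hsep : ∀ i j : Fin p, i < j → ∀ x ∈ Xs i, ∀ x' ∈ Xs j, x'.w ≤ x.w)
    (s : ℝ) (k j : ℕ) (hj : j ≤ p)
    (hk : k ≤ ((Finset.univ.filter (fun i : Fin p => (i : ℕ) < j)).biUnion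
                (fun i => (Xs i).filter (stabbed s))).card)
    (T : Finset WInterval)
    (hTsub : T ⊆ (Finset.univ.filter (fun i : Fin p => (i : ℕ) < j)).biUnion
                (fun i => (Xs i).filter (stabbed s)))
    (hTcard : T.card = k)
    (hTtop : ∀ y ∈ ((Finset.univ.filter (fun i : Fin p => (i : ℕ) < j)).biUnion
                (fun i => (Xs i).filter (stabbed s))) \ T, ∀ x ∈ T, y.w ≤ x.w) :
    ∀ y ∈ ((Finset.univ.biUnion Xs).filter (stabbed s)) \ T, ∀ x ∈ T, y.w ≤ x.w := by
  intro y hy x hx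
  rw [Finset.mem_sdiff, Finset.mem_filter, Finset.mem_biUnion] at hy
  obtain ⟨⟨⟨i, _, hyi⟩, hyst⟩, hyT⟩ := hy
  by_cases hij : (i : ℕ) < j
  · apply hTtop y _ x hx
    rw [Finset.mem_sdiff, Finset.mem_biUnion]
    exact ⟨⟨i, Finset.mem_filter.2 ⟨Finset.mem_univ _, hij⟩,
      Finset.mem_filter.2 ⟨hyi, hyst⟩⟩, hyT⟩
  · obtain ⟨i', hi', hxi'⟩ := Finset.mem_biUnion.1 (hTsub hx)
    rw [Finset.mem_filter] at hi' hxi'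
    exact hsep i' i (Fin.lt_def.2 (lt_of_lt_of_le hi'.2 (le_of_not_gt hij)))
      x hxi'.1 y hyi
end

section
/- Let v and s be real numbers with s ≤ v, and let A be a list of intervals such that every x in A satisfies x.l ≤ v ≤ x.r, and A is sorted in non-decreasing order of left endpoints. Then the sublist of A consisting of the intervals stabbed by s equals the longest prefix of A all of whose elements x satisfy x.l ≤ s; that is, A.filter (fun x => x.l ≤ s ∧ s ≤ x.r) = A.takeWhile (fun x => x.l ≤ s). -/
/-- Early-termination correctness when scanning `A_left` of an interval-tree node with
central point `v`, for a query value `s ≤ v`: if every interval of the list `A` contains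
`v` and `A` is sorted in non-decreasing order of left endpoints, then the stabbed
intervals of `A` form exactly the longest prefix whose elements satisfy `x.l ≤ s`. -/
theorem interval_tree_left_scan_prefix
    (v s : ℝ) (hsv : s ≤ v) (A : List WInterval)
    (hcov : ∀ x ∈ A, x.l ≤ v ∧ v ≤ x.r)
    (hsort : A.Pairwise (fun a b => a.l ≤ b.l)) :
    A.filter (fun x => decide (x.l ≤ s ∧ s ≤ x.r)) =
      A.takeWhile (fun x => decide (x.l ≤ s)) := by
  induction A with
  | nil => simp
  | cons a t ih =>
    have ha := hcov a List.mem_cons_self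
    have hsr : s ≤ a.r := hsv.trans ha.2
    rcases List.pairwise_cons.mp hsort with ⟨hrel, hsort'⟩
    by_cases h : a.l ≤ s
    · rw [List.filter_cons, List.takeWhile_cons]
      simp only [h, hsr, and_self]
      simp only [decide_true, if_true]
      rw [ih (fun x hx => hcov x (List.mem_cons_of_mem _ hx)) hsort']
    · rw [List.filter_cons, List.takeWhile_cons]
      have hnil : List.filter (fun x => decide (x.l ≤ s ∧ s ≤ x.r)) t = [] := by
        rw [List.filter_eq_nil_iff]
        intro x hx
        have : ¬ x.l ≤ s := fun hxl => h ((hrel x hx).trans hxl)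
        simp [this]
      simp only [List.filter_cons, List.takeWhile_cons, h, false_and]
      simpa [hnil] using fun x hx hxl => absurd ((hrel x hx).trans hxl) h
end

section
/- Let v and s be real numbers with v ≤ s, and let A be a list of intervals such that every x in A satisfies x.l ≤ v ≤ x.r, and A is sorted in non-increasing order of right endpoints. Then the sublist of A consisting of the intervals stabbed by s equals the longest prefix of A all of whose elements x satisfy s ≤ x.r; that is, A.filter (fun x => x.l ≤ s ∧ s ≤ x.r) = A.takeWhile (fun x => s ≤ x.r). -/
/-- Early-termination correctness when scanning the intervals of an interval-tree node
with central point `v` in decreasing order of right endpoint, for a query value `s ≥ v`: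
if every interval of the list `A` contains `v` and `A` is sorted in non-increasing order
of right endpoints, then the stabbed intervals of `A` form exactly the longest prefix
whose elements satisfy `s ≤ x.r`. -/
theorem interval_tree_right_scan_prefix
    (v s : ℝ) (hvs : v ≤ s) (A : List WInterval)
    (hcov : ∀ x ∈ A, x.l ≤ v ∧ v ≤ x.r)
    (hsort : A.Pairwise (fun a b => b.r ≤ a.r)) :
    A.filter (fun x => decide (x.l ≤ s ∧ s ≤ x.r)) =
      A.takeWhile (fun x => decide (s ≤ x.r)) := by
  induction A with
  | nil => rfl
  | cons a A ih =>
    have hla : a.l ≤ s := le_trans (hcov a (by simp)).1 hvs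
    rw [List.pairwise_cons] at hsort
    by_cases h : s ≤ a.r
    · rw [List.filter_cons, List.takeWhile_cons]
      simp only [h, hla, and_true, decide_true, if_true]
      rw [ih (fun x hx => hcov x (List.mem_cons_of_mem _ hx)) hsort.2]
    · rw [List.filter_cons, List.takeWhile_cons]
      simp only [h, and_false, decide_false, if_false, List.cons_ne_nil]
      apply List.filter_eq_nil_iff.mpr
      intro x hx
      have : ¬ s ≤ x.r := fun hs => h (le_trans hs (hsort.1 x hx))
      simp [this]
end
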